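/- Monadic-lifting lemma for closures: let Q ∈ Rel(ϱ1, ϱ2) and R ∈ Rel(τ1, τ2) be relations on closed values, and let e1, e2 be terms with x:ϱ_i ⊢ e_i : τ_i such that x is active in both e1 and e2. If for all (v1, v2) ∈ Q the substituted terms (e1[x↦v1], e2[x↦v2]) are in the stev-closure of R, then for all (e1', e2') in the stev-closure of Q, the terms (e1[x↦e1'], e2[x↦e2']) are in the stev-closure of R. -/

import Mathlib

namespace RecLC

/-! A call-by-value calculus with general recursion (and hence possible divergence):
the term-level core of the ML module calculus, with unit, int, products, functions
and `fix`. -/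

inductive Ty : Type where
  | unit : Ty
  | int : Ty
  | tvar (a : ℕ) : Ty
  | prod (t₁ t₂ : Ty) : Ty
  | arrow (t₁ t₂ : Ty) : Ty

inductive Tm : Type where
  | var (x : ℕ) : Tm
  | unitv : Tm
  | lit (n : ℤ) : Tm
  | pair (e₁ e₂ : Tm) : Tm
  | fst (e : Tm) : Tm
  | snd (e : Tm) : Tm
  | lam (x : ℕ) (τ : Ty) (b : Tm) : Tm
  | app (e₁ e₂ : Tm) : Tm
  | fixp (τ : Ty) (e : Tm) : Tm

def Ty.wf (Δ : Set ℕ) : Ty → Prop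
  | .unit => True
  | .int => True
  | .tvar a => a ∈ Δ
  | .prod t₁ t₂ => t₁.wf Δ ∧ t₂.wf Δ
  | .arrow t₁ t₂ => t₁.wf Δ ∧ t₂.wf Δ

def Ty.closed (τ : Ty) : Prop := τ.wf ∅

/-- Simultaneous substitution of (closed) terms for free term variables. -/
def Tm.msubst (γ : ℕ → Option Tm) : Tm → Tm
  | .var x => (γ x).getD (.var x)
  | .unitv => .unitv
  | .lit n => .lit n
  | .pair e₁ e₂ => .pair (e₁.msubst γ) (e₂.msubst γ)
  | .fst e => .fst (e.msubst γ)
  | .snd e => .snd (e.msubst γ)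
  | .lam x τ b => .lam x τ (b.msubst fun y => if y = x then none else γ y)
  | .app e₁ e₂ => .app (e₁.msubst γ) (e₂.msubst γ)
  | .fixp τ e => .fixp τ (e.msubst γ)

/-- `e[x ↦ e']`. -/
def Tm.subst1 (x : ℕ) (v : Tm) (e : Tm) : Tm :=
  e.msubst fun y => if y = x then some v else none

inductive IsValue : Tm → Prop
  | unitv : IsValue .unitv
  | lit (n : ℤ) : IsValue (.lit n)
  | pair {v₁ v₂ : Tm} : IsValue v₁ → IsValue v₂ → IsValue (.pair v₁ v₂)
  | lam (x : ℕ) (τ : Ty) (b : Tm) : IsValue (.lam x τ b)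

inductive Step : Tm → Tm → Prop
  | beta {x τ b v} : IsValue v → Step (.app (.lam x τ b) v) (Tm.subst1 x v b)
  | fstPair {v₁ v₂} : IsValue v₁ → IsValue v₂ → Step (.fst (.pair v₁ v₂)) v₁
  | sndPair {v₁ v₂} : IsValue v₁ → IsValue v₂ → Step (.snd (.pair v₁ v₂)) v₂
  | fixStep {τ e} : Step (.fixp τ e) (.app e (.lam 0 .unit (.fixp τ e)))
  | pairL {e₁ e₁' e₂} : Step e₁ e₁' → Step (.pair e₁ e₂) (.pair e₁' e₂)
  | pairR {v₁ e₂ e₂'} : IsValue v₁ → Step e₂ e₂' → Step (.pair v₁ e₂) (.pair v₁ e₂')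
  | fstC {e e'} : Step e e' → Step (.fst e) (.fst e')
  | sndC {e e'} : Step e e' → Step (.snd e) (.snd e')
  | appL {e₁ e₁' e₂} : Step e₁ e₁' → Step (.app e₁ e₂) (.app e₁' e₂)
  | appR {v₁ e₂ e₂'} : IsValue v₁ → Step e₂ e₂' → Step (.app v₁ e₂) (.app v₁ e₂')

def Steps : Tm → Tm → Prop := Relation.ReflTransGen Step

abbrev Ctx : Type := ℕ → Option Ty

def Ctx.empty : Ctx := fun _ => none

def Ctx.update (Γ : Ctx) (x : ℕ) (τ : Ty) : Ctx := fun y => if y = x then some τ else Γ y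

inductive HasTy : Set ℕ → Ctx → Tm → Ty → Prop
  | var {Δ Γ x τ} : Γ x = some τ → HasTy Δ Γ (.var x) τ
  | unitv {Δ Γ} : HasTy Δ Γ .unitv .unit
  | lit {Δ Γ} (n : ℤ) : HasTy Δ Γ (.lit n) .int
  | pair {Δ Γ e₁ e₂ τ₁ τ₂} : HasTy Δ Γ e₁ τ₁ → HasTy Δ Γ e₂ τ₂ →
      HasTy Δ Γ (.pair e₁ e₂) (.prod τ₁ τ₂)
  | fst {Δ Γ e τ₁ τ₂} : HasTy Δ Γ e (.prod τ₁ τ₂) → HasTy Δ Γ (.fst e) τ₁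
  | snd {Δ Γ e τ₁ τ₂} : HasTy Δ Γ e (.prod τ₁ τ₂) → HasTy Δ Γ (.snd e) τ₂
  | lam {Δ Γ x τ₁ b τ₂} : Ty.wf Δ τ₁ → HasTy Δ (Ctx.update Γ x τ₁) b τ₂ →
      HasTy Δ Γ (.lam x τ₁ b) (.arrow τ₁ τ₂)
  | app {Δ Γ e₁ e₂ τ₁ τ₂} : HasTy Δ Γ e₁ (.arrow τ₁ τ₂) → HasTy Δ Γ e₂ τ₁ →
      HasTy Δ Γ (.app e₁ e₂) τ₂
  | fixp {Δ Γ τ e} : Ty.wf Δ τ → HasTy Δ Γ e (.arrow (.arrow .unit τ) τ) →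
      HasTy Δ Γ (.fixp τ e) τ

def ClosedVal (τ : Ty) (v : Tm) : Prop := IsValue v ∧ HasTy ∅ Ctx.empty v τ

abbrev Rel : Type := Tm → Tm → Prop

/-- `R ∈ Rel(τ₁, τ₂)`: a relation on closed values of closed types. -/
def RelOn (τ₁ τ₂ : Ty) (R : Rel) : Prop :=
  Ty.closed τ₁ ∧ Ty.closed τ₂ ∧
  ∀ v₁ v₂, R v₁ v₂ → ClosedVal τ₁ v₁ ∧ ClosedVal τ₂ v₂

/-- Termination of evaluation. -/
def Terminates (e : Tm) : Prop := ∃ v, Steps e v ∧ IsValue v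

/-- `R^ev` (without the typing side conditions): the pair of terms co-terminates, and
whatever values they reach are related by `R`. -/
def evClo (R : Rel) : Rel := fun e₁ e₂ =>
  (Terminates e₁ ↔ Terminates e₂) ∧
  ∀ v₁ v₂, Steps e₁ v₁ → IsValue v₁ → Steps e₂ v₂ → IsValue v₂ → R v₁ v₂

/-- `R^ev` at types `τ₁, τ₂`. -/
def evCloT (τ₁ τ₂ : Ty) (R : Rel) : Rel := fun e₁ e₂ =>
  HasTy ∅ Ctx.empty e₁ τ₁ ∧ HasTy ∅ Ctx.empty e₂ τ₂ ∧ evClo R e₁ e₂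

/-- `R^s`: pairs of continuations of types `τ₁ → unit`, `τ₂ → unit` that agree on
termination for all `R`-related arguments. -/
def sClo (τ₁ τ₂ : Ty) (R : Rel) : Rel := fun k₁ k₂ =>
  ClosedVal (.arrow τ₁ .unit) k₁ ∧ ClosedVal (.arrow τ₂ .unit) k₂ ∧
  ∀ w₁ w₂, R w₁ w₂ → (Terminates (.app k₁ w₁) ↔ Terminates (.app k₂ w₂))

/-- `S^t`: pairs of values of types `τ₁, τ₂` on which all `S`-related continuations
agree on termination. -/
def tClo (τ₁ τ₂ : Ty) (S : Rel) : Rel := fun w₁ w₂ =>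
  ClosedVal τ₁ w₁ ∧ ClosedVal τ₂ w₂ ∧
  ∀ k₁ k₂, S k₁ k₂ → (Terminates (.app k₁ w₁) ↔ Terminates (.app k₂ w₂))

/-- `R^st`. -/
def stClo (τ₁ τ₂ : Ty) (R : Rel) : Rel := tClo τ₁ τ₂ (sClo τ₁ τ₂ R)

/-- `R` is Pitts closed when `R = R^st`. -/
def PittsClosed (τ₁ τ₂ : Ty) (R : Rel) : Prop :=
  ∀ v₁ v₂, R v₁ v₂ ↔ stClo τ₁ τ₂ R v₁ v₂

/-- The `stev`-closure `(R^st)^ev`. -/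
def stevClo (τ₁ τ₂ : Ty) (R : Rel) : Rel := evCloT τ₁ τ₂ (stClo τ₁ τ₂ R)

/-- `x` is active in `e` (with `x : ϱ ⊢ e : τ`): for every closed `e' : ϱ`, termination
of `e[x ↦ e']` implies termination of `e'`. -/
def Active (x : ℕ) (ϱ : Ty) (e : Tm) : Prop :=
  ∀ e', HasTy ∅ Ctx.empty e' ϱ → Terminates (Tm.subst1 x e' e) → Terminates e'

/-- The logical interpretation `⟦τ⟧ρ` of a type, on values. -/
def Interp (ρ : ℕ → Rel) : Ty → Rel
  | .unit => fun v₁ v₂ => v₁ = .unitv ∧ v₂ = .unitv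
  | .int => fun v₁ v₂ => ∃ n : ℤ, v₁ = .lit n ∧ v₂ = .lit n
  | .tvar a => fun v₁ v₂ => ρ a v₁ v₂
  | .prod t₁ t₂ => fun v₁ v₂ =>
      ∃ a₁ b₁ a₂ b₂, v₁ = .pair a₁ b₁ ∧ v₂ = .pair a₂ b₂ ∧
        Interp ρ t₁ a₁ a₂ ∧ Interp ρ t₂ b₁ b₂
  | .arrow t₁ t₂ => fun v₁ v₂ =>
      ∀ w₁ w₂, Interp ρ t₁ w₁ w₂ → evClo (Interp ρ t₂) (.app v₁ w₁) (.app v₂ w₂)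

/-- The empty environment. -/
def botEnv : ℕ → Rel := fun _ _ _ => False

/-! ### Auxiliary development -/

/-! #### Basic operational lemmas -/

lemma not_step_of_isValue {v t : Tm} (hv : IsValue v) : ¬ Step v t := by
  intro h
  induction hv generalizing t with
  | unitv => cases h
  | lit n => cases h
  | lam x τ b => cases h
  | pair h1 h2 ih1 ih2 =>
    cases h with
    | pairL hs => exact ih1 hs
    | pairR _ hs => exact ih2 hs

lemma value_steps_eq {a c : Tm} (h : Steps a c) (ha : IsValue a) : a = c := by
  rcases h.cases_head with rfl | ⟨z, hz, _⟩
  · rfl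
  · exact absurd hz (not_step_of_isValue ha)

lemma step_det {t a b : Tm} (h1 : Step t a) (h2 : Step t b) : a = b := by
  induction h1 generalizing b with
  | @beta x τ bb v hv =>
    cases h2 with
    | beta _ => rfl
    | appL h => exact absurd h (not_step_of_isValue (.lam _ _ _))
    | appR _ h => exact absurd h (not_step_of_isValue hv)
  | fstPair hv1 hv2 =>
    cases h2 with
    | fstPair _ _ => rfl
    | fstC h => exact absurd h (not_step_of_isValue (.pair hv1 hv2))
  | sndPair hv1 hv2 =>
    cases h2 with
    | sndPair _ _ => rfl
    | sndC h => exact absurd h (not_step_of_isValue (.pair hv1 hv2))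
  | fixStep => cases h2 with | fixStep => rfl
  | pairL h ih =>
    cases h2 with
    | pairL h' => rw [ih h']
    | pairR hv _ => exact absurd h (not_step_of_isValue hv)
  | pairR hv h ih =>
    cases h2 with
    | pairL h' => exact absurd h' (not_step_of_isValue hv)
    | pairR _ h' => rw [ih h']
  | fstC h ih =>
    cases h2 with
    | fstPair hv1 hv2 => exact absurd h (not_step_of_isValue (.pair hv1 hv2))
    | fstC h' => rw [ih h']
  | sndC h ih =>
    cases h2 with
    | sndPair hv1 hv2 => exact absurd h (not_step_of_isValue (.pair hv1 hv2))
    | sndC h' => rw [ih h']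
  | appL h ih =>
    cases h2 with
    | beta hv => exact absurd h (not_step_of_isValue (.lam _ _ _))
    | appL h' => rw [ih h']
    | appR hv _ => exact absurd h (not_step_of_isValue hv)
  | appR hv h ih =>
    cases h2 with
    | beta hv' => exact absurd h (not_step_of_isValue hv')
    | appL h' => exact absurd h' (not_step_of_isValue hv)
    | appR _ h' => rw [ih h']

lemma steps_pairL {a a' b : Tm} (h : Steps a a') : Steps (.pair a b) (.pair a' b) :=
  Relation.ReflTransGen.lift (fun t => Tm.pair t b) (fun _ _ h => Step.pairL h) _ _ h

lemma steps_pairR {a b b' : Tm} (hv : IsValue a) (h : Steps b b') :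
    Steps (.pair a b) (.pair a b') :=
  Relation.ReflTransGen.lift (fun t => Tm.pair a t) (fun _ _ h => Step.pairR hv h) _ _ h

lemma steps_fst {a a' : Tm} (h : Steps a a') : Steps (.fst a) (.fst a') :=
  Relation.ReflTransGen.lift Tm.fst (fun _ _ h => Step.fstC h) _ _ h

lemma steps_snd {a a' : Tm} (h : Steps a a') : Steps (.snd a) (.snd a') :=
  Relation.ReflTransGen.lift Tm.snd (fun _ _ h => Step.sndC h) _ _ h

lemma steps_appL {a a' b : Tm} (h : Steps a a') : Steps (.app a b) (.app a' b) :=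
  Relation.ReflTransGen.lift (fun t => Tm.app t b) (fun _ _ h => Step.appL h) _ _ h

lemma steps_appR {a b b' : Tm} (hv : IsValue a) (h : Steps b b') :
    Steps (.app a b) (.app a b') :=
  Relation.ReflTransGen.lift (fun t => Tm.app a t) (fun _ _ h => Step.appR hv h) _ _ h

lemma steps_confl {a b c : Tm} (hab : Steps a b) (hac : Steps a c) (hc : IsValue c) :
    Steps b c := by
  induction hab with
  | refl => exact hac
  | tail hsteps hstep ih =>
    rcases ih.cases_head with rfl | ⟨z, hz, hrest⟩
    · exact absurd hstep (not_step_of_isValue hc)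
    · rwa [step_det hstep hz]

lemma steps_det_value {m w w' : Tm} (h1 : Steps m w) (hw : IsValue w)
    (h2 : Steps m w') (hw' : IsValue w') : w = w' :=
  value_steps_eq (steps_confl h1 h2 hw') hw

lemma step_term_iff {t t' : Tm} (h : Step t t') : Terminates t ↔ Terminates t' := by
  constructor
  · rintro ⟨u, hu, huv⟩
    rcases hu.cases_head with rfl | ⟨z, hz, hrest⟩
    · exact absurd h (not_step_of_isValue huv)
    · rw [step_det h hz]; exact ⟨u, hrest, huv⟩
  · rintro ⟨u, hu, huv⟩
    exact ⟨u, hu.head h, huv⟩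

lemma term_of_steps_term {t t' : Tm} (h : Steps t t') (ht : Terminates t') : Terminates t := by
  obtain ⟨u, hu, huv⟩ := ht; exact ⟨u, h.trans hu, huv⟩

lemma app_steps_value_aux {k u : Tm} (hk : IsValue k) {t : Tm} (h : Steps t u) (hu : IsValue u) :
    ∀ m, t = .app k m → ∃ w, IsValue w ∧ Steps m w ∧ Steps (.app k w) u := by
  induction h using Relation.ReflTransGen.head_induction_on with
  | refl => intro m hm; subst hm; cases hu
  | head hstep hsteps ih =>
    intro m hm; subst hm
    cases hstep with
    | beta hv => exact ⟨m, hv, .refl, (Relation.ReflTransGen.head (Step.beta hv) hsteps)⟩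
    | appL h => exact absurd h (not_step_of_isValue hk)
    | appR _ h2 =>
      obtain ⟨w, hwv, hsw, hrest⟩ := ih _ rfl
      exact ⟨w, hwv, hsw.head h2, hrest⟩

lemma app_steps_value {k m u : Tm} (hk : IsValue k) (h : Steps (.app k m) u) (hu : IsValue u) :
    ∃ w, IsValue w ∧ Steps m w ∧ Steps (.app k w) u :=
  app_steps_value_aux hk h hu m rfl

lemma term_of_app_term {k m : Tm} (hk : IsValue k) (h : Terminates (.app k m)) :
    Terminates m := by
  obtain ⟨u, hu, huv⟩ := h
  obtain ⟨w, hwv, hsw, _⟩ := app_steps_value hk hu huv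
  exact ⟨w, hsw, hwv⟩

lemma term_app_value {k m w : Tm} (hk : IsValue k) (hm : Steps m w) (hw : IsValue w) :
    Terminates (.app k m) ↔ Terminates (.app k w) := by
  constructor
  · rintro ⟨u, hu, huv⟩
    obtain ⟨w', hw'v, hsw', hrest⟩ := app_steps_value hk hu huv
    rw [← steps_det_value hm hw hsw' hw'v] at hrest
    exact ⟨u, hrest, huv⟩
  · exact term_of_steps_term (steps_appR hk hm)

/-! #### Free variables and typing lemmas -/

def fv : Tm → Set ℕ
  | .var x => {x}
  | .unitv => ∅
  | .lit _ => ∅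
  | .pair a b => fv a ∪ fv b
  | .fst a => fv a
  | .snd a => fv a
  | .lam x _ b => fv b \ {x}
  | .app a b => fv a ∪ fv b
  | .fixp _ a => fv a

lemma msubst_id {e : Tm} {γ : ℕ → Option Tm} (h : ∀ y ∈ fv e, γ y = none) :
    e.msubst γ = e := by
  induction e generalizing γ with
  | var x => simp [Tm.msubst, h x (by simp [fv])]
  | unitv => rfl
  | lit n => rfl
  | pair a b iha ihb =>
    simp only [Tm.msubst]
    rw [iha (fun y hy => h y (Or.inl hy)), ihb (fun y hy => h y (Or.inr hy))]
  | fst a iha => simp only [Tm.msubst]; rw [iha h]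
  | snd a iha => simp only [Tm.msubst]; rw [iha h]
  | lam x τ b ihb =>
    simp only [Tm.msubst]
    rw [ihb]
    intro y hy
    by_cases hyx : y = x
    · simp [hyx]
    · simp only [hyx, if_false]
      exact h y ⟨hy, hyx⟩
  | app a b iha ihb =>
    simp only [Tm.msubst]
    rw [iha (fun y hy => h y (Or.inl hy)), ihb (fun y hy => h y (Or.inr hy))]
  | fixp τ a iha => simp only [Tm.msubst]; rw [iha h]

lemma hasTy_fv {Δ : Set ℕ} {Γ : Ctx} {e : Tm} {τ : Ty} (h : HasTy Δ Γ e τ) :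
    ∀ y ∈ fv e, (Γ y).isSome := by
  induction h with
  | @var Γ x τ hx => intro y hy; rcases hy with rfl; simp [hx]
  | unitv => intro y hy; cases hy
  | lit n => intro y hy; cases hy
  | pair h1 h2 ih1 ih2 => rintro y (hy | hy); exacts [ih1 y hy, ih2 y hy]
  | fst h ih => exact ih
  | snd h ih => exact ih
  | @lam Γ x τ₁ b τ₂ hwf hb ih =>
    rintro y ⟨hy, hyx⟩
    have hyx' : y ≠ x := by simpa using hyx
    have := ih y hy
    simpa [Ctx.update, hyx'] using this
  | app h1 h2 ih1 ih2 => rintro y (hy | hy); exacts [ih1 y hy, ih2 y hy]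
  | fixp hwf h ih => exact ih

lemma closed_msubst_id {e : Tm} {τ : Ty} (ht : HasTy ∅ Ctx.empty e τ) (γ : ℕ → Option Tm) :
    e.msubst γ = e := by
  apply msubst_id
  intro y hy
  have := hasTy_fv ht y hy
  simp [Ctx.empty] at this

lemma closed_subst1_id {e : Tm} {τ : Ty} (ht : HasTy ∅ Ctx.empty e τ) (x : ℕ) (u : Tm) :
    Tm.subst1 x u e = e := closed_msubst_id ht _

lemma Ty.wf_mono {Δ Δ' : Set ℕ} {τ : Ty} (h : Ty.wf Δ τ) (hs : Δ ⊆ Δ') : Ty.wf Δ' τ := by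
  induction τ with
  | unit => trivial
  | int => trivial
  | tvar a => exact hs h
  | prod t₁ t₂ ih1 ih2 => exact ⟨ih1 h.1, ih2 h.2⟩
  | arrow t₁ t₂ ih1 ih2 => exact ⟨ih1 h.1, ih2 h.2⟩

lemma hasTy_weaken {Δ : Set ℕ} {Γ : Ctx} {e : Tm} {τ : Ty} (h : HasTy Δ Γ e τ)
    {Δ' : Set ℕ} {Γ' : Ctx} (hΔ : Δ ⊆ Δ') (hΓ : ∀ y t, Γ y = some t → Γ' y = some t) :
    HasTy Δ' Γ' e τ := by
  induction h generalizing Γ' with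
  | var hx => exact .var (hΓ _ _ hx)
  | unitv => exact .unitv
  | lit n => exact .lit n
  | pair h1 h2 ih1 ih2 => exact .pair (ih1 hΓ) (ih2 hΓ)
  | fst h ih => exact .fst (ih hΓ)
  | snd h ih => exact .snd (ih hΓ)
  | @lam Γ x τ₁ b τ₂ hwf hb ih =>
    refine .lam (Ty.wf_mono hwf hΔ) (ih ?_)
    intro y t hy
    simp only [Ctx.update] at hy ⊢
    by_cases hyx : y = x
    · simpa [hyx] using hy
    · simp only [hyx, if_false] at hy ⊢; exact hΓ _ _ hy
  | app h1 h2 ih1 ih2 => exact .app (ih1 hΓ) (ih2 hΓ)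
  | fixp hwf h ih => exact .fixp (Ty.wf_mono hwf hΔ) (ih hΓ)

lemma hasTy_of_closed {Δ : Set ℕ} {Γ : Ctx} {e : Tm} {τ : Ty} (h : HasTy ∅ Ctx.empty e τ) :
    HasTy Δ Γ e τ :=
  hasTy_weaken h (Set.empty_subset _) (fun y t hy => by simp [Ctx.empty] at hy)

lemma msubst_hasTy {Δ : Set ℕ} {Γ : Ctx} {e : Tm} {τ : Ty} (h : HasTy Δ Γ e τ)
    {γ : ℕ → Option Tm} {Γ' : Ctx}
    (hγ : ∀ y t, Γ y = some t →
      (γ y = none ∧ Γ' y = some t) ∨ ∃ u, γ y = some u ∧ HasTy ∅ Ctx.empty u t) :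
    HasTy Δ Γ' (e.msubst γ) τ := by
  induction h generalizing γ Γ' with
  | var hx =>
    rcases hγ _ _ hx with ⟨h1, h2⟩ | ⟨u, hu, hty⟩
    · simpa [Tm.msubst, h1] using HasTy.var h2
    · simpa [Tm.msubst, hu] using hasTy_of_closed hty
  | unitv => exact .unitv
  | lit n => exact .lit n
  | pair h1 h2 ih1 ih2 => exact .pair (ih1 hγ) (ih2 hγ)
  | fst h ih => exact .fst (ih hγ)
  | snd h ih => exact .snd (ih hγ)
  | @lam Γ x τ₁ b τ₂ hwf hb ih =>
    refine .lam hwf (ih ?_)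
    intro y t hy
    simp only [Ctx.update] at hy ⊢
    by_cases hyx : y = x
    · subst hyx; simp at hy; subst hy; exact Or.inl ⟨by simp, by simp⟩
    · simp only [hyx, if_false] at hy ⊢
      exact hγ _ _ hy
  | app h1 h2 ih1 ih2 => exact .app (ih1 hγ) (ih2 hγ)
  | fixp hwf h ih => exact .fixp hwf (ih hγ)

lemma subst1_hasTy {x : ℕ} {ϱ τ : Ty} {e e' : Tm}
    (h : HasTy ∅ (Ctx.update Ctx.empty x ϱ) e τ) (h' : HasTy ∅ Ctx.empty e' ϱ) :
    HasTy ∅ Ctx.empty (Tm.subst1 x e' e) τ := by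
  apply msubst_hasTy h
  intro y t hy
  simp only [Ctx.update, Ctx.empty] at hy
  by_cases hyx : y = x
  · subst hyx; simp at hy; subst hy; exact Or.inr ⟨e', by simp, h'⟩
  · simp [hyx] at hy

lemma preservation {e e' : Tm} {τ : Ty} (hs : Step e e') (ht : HasTy ∅ Ctx.empty e τ) :
    HasTy ∅ Ctx.empty e' τ := by
  induction hs generalizing τ with
  | beta hv =>
    cases ht with
    | app h1 h2 => cases h1 with | lam hwf hb => exact subst1_hasTy hb h2
  | fstPair _ _ => cases ht with | fst h => cases h with | pair h1 h2 => exact h1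
  | sndPair _ _ => cases ht with | snd h => cases h with | pair h1 h2 => exact h2
  | fixStep =>
    cases ht with
    | fixp hwf he =>
      exact .app he (.lam trivial (hasTy_of_closed (.fixp hwf he)))
  | pairL h ih => cases ht with | pair h1 h2 => exact .pair (ih h1) h2
  | pairR hv h ih => cases ht with | pair h1 h2 => exact .pair h1 (ih h2)
  | fstC h ih => cases ht with | fst h1 => exact .fst (ih h1)
  | sndC h ih => cases ht with | snd h1 => exact .snd (ih h1)
  | appL h ih => cases ht with | app h1 h2 => exact .app (ih h1) h2
  | appR hv h ih => cases ht with | app h1 h2 => exact .app h1 (ih h2)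

lemma steps_preservation {e e' : Tm} {τ : Ty} (hs : Steps e e') (ht : HasTy ∅ Ctx.empty e τ) :
    HasTy ∅ Ctx.empty e' τ := by
  induction hs with
  | refl => exact ht
  | tail _ hstep ih => exact preservation hstep ih

/-! #### The replacement relation and its simulation properties -/

/-- `Rpl v ϱ t s`: `s` is obtained from `t` by replacing some closed, well-typed
subterms that evaluate to `v` by `v` itself. -/
inductive Rpl (v : Tm) (ϱ : Ty) : Tm → Tm → Prop
  | repl {a} : Steps a v → HasTy ∅ Ctx.empty a ϱ → Rpl v ϱ a v
  | var (x) : Rpl v ϱ (.var x) (.var x)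
  | unitv : Rpl v ϱ .unitv .unitv
  | lit (n) : Rpl v ϱ (.lit n) (.lit n)
  | pair {a₁ a₂ b₁ b₂} : Rpl v ϱ a₁ a₂ → Rpl v ϱ b₁ b₂ → Rpl v ϱ (.pair a₁ b₁) (.pair a₂ b₂)
  | fst {a₁ a₂} : Rpl v ϱ a₁ a₂ → Rpl v ϱ (.fst a₁) (.fst a₂)
  | snd {a₁ a₂} : Rpl v ϱ a₁ a₂ → Rpl v ϱ (.snd a₁) (.snd a₂)
  | lam {b₁ b₂} (x τ) : Rpl v ϱ b₁ b₂ → Rpl v ϱ (.lam x τ b₁) (.lam x τ b₂)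
  | app {a₁ a₂ b₁ b₂} : Rpl v ϱ a₁ a₂ → Rpl v ϱ b₁ b₂ → Rpl v ϱ (.app a₁ b₁) (.app a₂ b₂)
  | fixp {a₁ a₂} (τ) : Rpl v ϱ a₁ a₂ → Rpl v ϱ (.fixp τ a₁) (.fixp τ a₂)

lemma Rpl.refl (v : Tm) (ϱ : Ty) (t : Tm) : Rpl v ϱ t t := by
  induction t with
  | var x => exact .var x
  | unitv => exact .unitv
  | lit n => exact .lit n
  | pair a b iha ihb => exact .pair iha ihb
  | fst a iha => exact .fst iha
  | snd a iha => exact .snd iha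
  | lam x τ b ihb => exact .lam x τ ihb
  | app a b iha ihb => exact .app iha ihb
  | fixp τ a iha => exact .fixp τ iha

lemma Rpl.msubst_cong {v : Tm} {ϱ : Ty} {b b' : Tm} (h : Rpl v ϱ b b')
    {γ γ' : ℕ → Option Tm}
    (hγ : ∀ y, (γ y = none ∧ γ' y = none) ∨
      ∃ u u', γ y = some u ∧ γ' y = some u' ∧ Rpl v ϱ u u') :
    Rpl v ϱ (b.msubst γ) (b'.msubst γ') := by
  induction h generalizing γ γ' with
  | repl hs ht =>
    rw [closed_msubst_id ht, closed_msubst_id (steps_preservation hs ht)]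
    exact .repl hs ht
  | var x =>
    rcases hγ x with ⟨h1, h2⟩ | ⟨u, u', h1, h2, h3⟩
    · simpa [Tm.msubst, h1, h2] using Rpl.var x
    · simpa [Tm.msubst, h1, h2] using h3
  | unitv => exact .unitv
  | lit n => exact .lit n
  | pair _ _ ih1 ih2 => exact .pair (ih1 hγ) (ih2 hγ)
  | fst _ ih => exact .fst (ih hγ)
  | snd _ ih => exact .snd (ih hγ)
  | lam x τ _ ih =>
    refine .lam x τ (ih ?_)
    intro y
    by_cases hyx : y = x
    · simp [hyx]
    · simpa [hyx] using hγ y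
  | app _ _ ih1 ih2 => exact .app (ih1 hγ) (ih2 hγ)
  | fixp τ _ ih => exact .fixp τ (ih hγ)

lemma Rpl.subst_cong {v : Tm} {ϱ : Ty} {b b' u u' : Tm} (hb : Rpl v ϱ b b')
    (hu : Rpl v ϱ u u') (x : ℕ) :
    Rpl v ϱ (Tm.subst1 x u b) (Tm.subst1 x u' b') := by
  apply Rpl.msubst_cong hb
  intro y
  by_cases hyx : y = x
  · exact Or.inr ⟨u, u', by simp [hyx], by simp [hyx], hu⟩
  · exact Or.inl ⟨by simp [hyx], by simp [hyx]⟩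

lemma Rpl.subst_into {v : Tm} {ϱ : Ty} {u u' : Tm} (hu : Rpl v ϱ u u') (x : ℕ) (e : Tm) :
    Rpl v ϱ (Tm.subst1 x u e) (Tm.subst1 x u' e) :=
  Rpl.subst_cong (Rpl.refl v ϱ e) hu x

/-- If the right side is a value, the left side evaluates to a related value. -/
lemma Rpl.left_value {v : Tm} {ϱ : Ty} (hv : IsValue v) {t s : Tm} (h : Rpl v ϱ t s)
    (hs : IsValue s) : ∃ t', IsValue t' ∧ Steps t t' ∧ Rpl v ϱ t' s := by
  induction h with
  | repl hst _ => exact ⟨v, hv, hst, Rpl.refl v ϱ v⟩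
  | var x => cases hs
  | unitv => exact ⟨.unitv, .unitv, .refl, .unitv⟩
  | lit n => exact ⟨.lit n, .lit n, .refl, .lit n⟩
  | pair h1 h2 ih1 ih2 =>
    cases hs with
    | pair hs1 hs2 =>
      obtain ⟨t₁, ht₁v, hst₁, hr₁⟩ := ih1 hs1
      obtain ⟨t₂, ht₂v, hst₂, hr₂⟩ := ih2 hs2
      exact ⟨.pair t₁ t₂, .pair ht₁v ht₂v,
        (steps_pairL hst₁).trans (steps_pairR ht₁v hst₂), .pair hr₁ hr₂⟩
  | fst _ _ => cases hs
  | snd _ _ => cases hs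
  | lam x τ h => exact ⟨_, .lam x τ _, .refl, .lam x τ h⟩
  | app _ _ _ _ => cases hs
  | fixp _ _ _ => cases hs

/-- If the left side is a value, the right side evaluates to a related value. -/
lemma Rpl.right_value {v : Tm} {ϱ : Ty} (hv : IsValue v) {t s : Tm} (h : Rpl v ϱ t s)
    (ht : IsValue t) : ∃ s', IsValue s' ∧ Steps s s' ∧ Rpl v ϱ t s' := by
  induction h with
  | repl hst hty => exact ⟨v, hv, .refl, .repl hst hty⟩
  | var x => cases ht
  | unitv => exact ⟨.unitv, .unitv, .refl, .unitv⟩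
  | lit n => exact ⟨.lit n, .lit n, .refl, .lit n⟩
  | pair h1 h2 ih1 ih2 =>
    cases ht with
    | pair ht1 ht2 =>
      obtain ⟨s₁, hs₁v, hss₁, hr₁⟩ := ih1 ht1
      obtain ⟨s₂, hs₂v, hss₂, hr₂⟩ := ih2 ht2
      exact ⟨.pair s₁ s₂, .pair hs₁v hs₂v,
        (steps_pairL hss₁).trans (steps_pairR hs₁v hss₂), .pair hr₁ hr₂⟩
  | fst _ _ => cases ht
  | snd _ _ => cases ht
  | lam x τ h => exact ⟨_, .lam x τ _, .refl, .lam x τ h⟩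
  | app _ _ _ _ => cases ht
  | fixp _ _ _ => cases ht

lemma Rpl.repl_step {v : Tm} {ϱ : Ty} (hv : IsValue v) {t t' : Tm} (hst : Steps t v)
    (hty : HasTy ∅ Ctx.empty t ϱ) (hstep : Step t t') : Rpl v ϱ t' v := by
  rcases hst.cases_head with rfl | ⟨z, hz, hrest⟩
  · exact absurd hstep (not_step_of_isValue hv)
  · rw [step_det hstep hz]; exact .repl hrest (preservation hz hty)

/-- Forward simulation: a step on the left is matched by steps on the right. -/
lemma Rpl.sim1 {v : Tm} {ϱ : Ty} (hv : IsValue v) {t t' : Tm} (hstep : Step t t') :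
    ∀ {s : Tm}, Rpl v ϱ t s → ∃ s', Steps s s' ∧ Rpl v ϱ t' s' := by
  induction hstep with
  | @beta x τ b w hw =>
    intro s h
    cases h with
    | repl hst hty => exact ⟨v, .refl, Rpl.repl_step hv hst hty (Step.beta hw)⟩
    | app h1 h2 =>
      obtain ⟨ws, hwsv, hsteps2, h2'⟩ := Rpl.right_value hv h2 hw
      cases h1 with
      | repl hst hty =>
        obtain rfl := (value_steps_eq hst (.lam x τ b)).symm
        exact ⟨_, (steps_appR (.lam x τ b) hsteps2).tail (Step.beta hwsv),
          Rpl.subst_cong (Rpl.refl _ _ b) h2' x⟩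
      | lam _ _ hb =>
        exact ⟨_, (steps_appR (.lam _ _ _) hsteps2).tail (Step.beta hwsv),
          Rpl.subst_cong hb h2' x⟩
  | fstPair hv1 hv2 =>
    intro s h
    cases h with
    | repl hst hty => exact ⟨v, .refl, Rpl.repl_step hv hst hty (Step.fstPair hv1 hv2)⟩
    | fst h0 =>
      obtain ⟨s₀', hs₀'v, hsteps0, h0'⟩ := Rpl.right_value hv h0 (.pair hv1 hv2)
      cases h0' with
      | repl hst hty =>
        obtain rfl := (value_steps_eq hst (.pair hv1 hv2)).symm
        exact ⟨_, (steps_fst hsteps0).tail (Step.fstPair hv1 hv2), Rpl.refl _ _ _⟩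
      | pair ha hb =>
        cases hs₀'v with
        | pair hav hbv => exact ⟨_, (steps_fst hsteps0).tail (Step.fstPair hav hbv), ha⟩
  | sndPair hv1 hv2 =>
    intro s h
    cases h with
    | repl hst hty => exact ⟨v, .refl, Rpl.repl_step hv hst hty (Step.sndPair hv1 hv2)⟩
    | snd h0 =>
      obtain ⟨s₀', hs₀'v, hsteps0, h0'⟩ := Rpl.right_value hv h0 (.pair hv1 hv2)
      cases h0' with
      | repl hst hty =>
        obtain rfl := (value_steps_eq hst (.pair hv1 hv2)).symm
        exact ⟨_, (steps_snd hsteps0).tail (Step.sndPair hv1 hv2), Rpl.refl _ _ _⟩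
      | pair ha hb =>
        cases hs₀'v with
        | pair hav hbv => exact ⟨_, (steps_snd hsteps0).tail (Step.sndPair hav hbv), hb⟩
  | fixStep =>
    intro s h
    cases h with
    | repl hst hty => exact ⟨v, .refl, Rpl.repl_step hv hst hty Step.fixStep⟩
    | fixp τ h0 =>
      exact ⟨_, Relation.ReflTransGen.single Step.fixStep,
        .app h0 (.lam 0 .unit (.fixp _ h0))⟩
  | pairL hs1 ih =>
    intro s h
    cases h with
    | repl hst hty => exact ⟨v, .refl, Rpl.repl_step hv hst hty (Step.pairL hs1)⟩
    | pair h1 h2 =>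
      obtain ⟨s₁', hsteps1, h1'⟩ := ih h1
      exact ⟨_, steps_pairL hsteps1, .pair h1' h2⟩
  | pairR hv1 hs2 ih =>
    intro s h
    cases h with
    | repl hst hty => exact ⟨v, .refl, Rpl.repl_step hv hst hty (Step.pairR hv1 hs2)⟩
    | pair h1 h2 =>
      obtain ⟨s₁', hs₁'v, hsteps1, h1'⟩ := Rpl.right_value hv h1 hv1
      obtain ⟨s₂', hsteps2, h2'⟩ := ih h2
      exact ⟨_, (steps_pairL hsteps1).trans (steps_pairR hs₁'v hsteps2), .pair h1' h2'⟩
  | fstC hs ih =>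
    intro s h
    cases h with
    | repl hst hty => exact ⟨v, .refl, Rpl.repl_step hv hst hty (Step.fstC hs)⟩
    | fst h0 =>
      obtain ⟨s₀', hsteps0, h0'⟩ := ih h0
      exact ⟨_, steps_fst hsteps0, .fst h0'⟩
  | sndC hs ih =>
    intro s h
    cases h with
    | repl hst hty => exact ⟨v, .refl, Rpl.repl_step hv hst hty (Step.sndC hs)⟩
    | snd h0 =>
      obtain ⟨s₀', hsteps0, h0'⟩ := ih h0
      exact ⟨_, steps_snd hsteps0, .snd h0'⟩
  | appL hs ih =>
    intro s h
    cases h with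
    | repl hst hty => exact ⟨v, .refl, Rpl.repl_step hv hst hty (Step.appL hs)⟩
    | app h1 h2 =>
      obtain ⟨s₁', hsteps1, h1'⟩ := ih h1
      exact ⟨_, steps_appL hsteps1, .app h1' h2⟩
  | appR hv1 hs ih =>
    intro s h
    cases h with
    | repl hst hty => exact ⟨v, .refl, Rpl.repl_step hv hst hty (Step.appR hv1 hs)⟩
    | app h1 h2 =>
      obtain ⟨s₁', hs₁'v, hsteps1, h1'⟩ := Rpl.right_value hv h1 hv1
      obtain ⟨s₂', hsteps2, h2'⟩ := ih h2
      exact ⟨_, (steps_appL hsteps1).trans (steps_appR hs₁'v hsteps2), .app h1' h2'⟩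

/-- Backward simulation: a step on the right is matched by steps on the left. -/
lemma Rpl.sim2 {v : Tm} {ϱ : Ty} (hv : IsValue v) {s s' : Tm} (hstep : Step s s') :
    ∀ {t : Tm}, Rpl v ϱ t s → ∃ t', Steps t t' ∧ Rpl v ϱ t' s' := by
  induction hstep with
  | @beta x τ b w hw =>
    intro t h
    cases h with
    | repl _ _ => exact absurd (Step.beta hw) (not_step_of_isValue hv)
    | app h1 h2 =>
      obtain ⟨wt, hwtv, hsteps2, h2'⟩ := Rpl.left_value hv h2 hw
      cases h1 with
      | repl hst hty =>
        exact ⟨_, ((steps_appL hst).trans (steps_appR hv hsteps2)).tail (Step.beta hwtv),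
          Rpl.subst_cong (Rpl.refl _ _ b) h2' x⟩
      | lam _ _ hb =>
        exact ⟨_, (steps_appR (.lam _ _ _) hsteps2).tail (Step.beta hwtv),
          Rpl.subst_cong hb h2' x⟩
  | fstPair hv1 hv2 =>
    intro t h
    cases h with
    | repl _ _ => exact absurd (Step.fstPair hv1 hv2) (not_step_of_isValue hv)
    | fst h0 =>
      obtain ⟨t₀', ht₀'v, hsteps0, h0'⟩ := Rpl.left_value hv h0 (.pair hv1 hv2)
      cases h0' with
      | repl hst hty =>
        obtain rfl := value_steps_eq hst ht₀'v
        exact ⟨_, (steps_fst hsteps0).tail (Step.fstPair hv1 hv2), Rpl.refl _ _ _⟩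
      | pair ha hb =>
        cases ht₀'v with
        | pair hav hbv => exact ⟨_, (steps_fst hsteps0).tail (Step.fstPair hav hbv), ha⟩
  | sndPair hv1 hv2 =>
    intro t h
    cases h with
    | repl _ _ => exact absurd (Step.sndPair hv1 hv2) (not_step_of_isValue hv)
    | snd h0 =>
      obtain ⟨t₀', ht₀'v, hsteps0, h0'⟩ := Rpl.left_value hv h0 (.pair hv1 hv2)
      cases h0' with
      | repl hst hty =>
        obtain rfl := value_steps_eq hst ht₀'v
        exact ⟨_, (steps_snd hsteps0).tail (Step.sndPair hv1 hv2), Rpl.refl _ _ _⟩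
      | pair ha hb =>
        cases ht₀'v with
        | pair hav hbv => exact ⟨_, (steps_snd hsteps0).tail (Step.sndPair hav hbv), hb⟩
  | fixStep =>
    intro t h
    cases h with
    | repl _ _ => exact absurd Step.fixStep (not_step_of_isValue hv)
    | fixp τ h0 =>
      exact ⟨_, Relation.ReflTransGen.single Step.fixStep,
        .app h0 (.lam 0 .unit (.fixp _ h0))⟩
  | pairL hs1 ih =>
    intro t h
    cases h with
    | repl _ _ => exact absurd (Step.pairL hs1) (not_step_of_isValue hv)
    | pair h1 h2 =>
      obtain ⟨t₁', hsteps1, h1'⟩ := ih h1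
      exact ⟨_, steps_pairL hsteps1, .pair h1' h2⟩
  | pairR hv1 hs2 ih =>
    intro t h
    cases h with
    | repl _ _ => exact absurd (Step.pairR hv1 hs2) (not_step_of_isValue hv)
    | pair h1 h2 =>
      obtain ⟨t₁', ht₁'v, hsteps1, h1'⟩ := Rpl.left_value hv h1 hv1
      obtain ⟨t₂', hsteps2, h2'⟩ := ih h2
      exact ⟨_, (steps_pairL hsteps1).trans (steps_pairR ht₁'v hsteps2), .pair h1' h2'⟩
  | fstC hs ih =>
    intro t h
    cases h with
    | repl _ _ => exact absurd (Step.fstC hs) (not_step_of_isValue hv)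
    | fst h0 =>
      obtain ⟨t₀', hsteps0, h0'⟩ := ih h0
      exact ⟨_, steps_fst hsteps0, .fst h0'⟩
  | sndC hs ih =>
    intro t h
    cases h with
    | repl _ _ => exact absurd (Step.sndC hs) (not_step_of_isValue hv)
    | snd h0 =>
      obtain ⟨t₀', hsteps0, h0'⟩ := ih h0
      exact ⟨_, steps_snd hsteps0, .snd h0'⟩
  | appL hs ih =>
    intro t h
    cases h with
    | repl _ _ => exact absurd (Step.appL hs) (not_step_of_isValue hv)
    | app h1 h2 =>
      obtain ⟨t₁', hsteps1, h1'⟩ := ih h1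
      exact ⟨_, steps_appL hsteps1, .app h1' h2⟩
  | appR hv1 hs ih =>
    intro t h
    cases h with
    | repl _ _ => exact absurd (Step.appR hv1 hs) (not_step_of_isValue hv)
    | app h1 h2 =>
      obtain ⟨t₁', ht₁'v, hsteps1, h1'⟩ := Rpl.left_value hv h1 hv1
      obtain ⟨t₂', hsteps2, h2'⟩ := ih h2
      exact ⟨_, (steps_appL hsteps1).trans (steps_appR ht₁'v hsteps2), .app h1' h2'⟩

lemma Rpl.sim1s {v : Tm} {ϱ : Ty} (hv : IsValue v) {t t' s : Tm} (h : Rpl v ϱ t s)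
    (hsteps : Steps t t') : ∃ s', Steps s s' ∧ Rpl v ϱ t' s' := by
  induction hsteps with
  | refl => exact ⟨s, .refl, h⟩
  | tail _ hstep ih =>
    obtain ⟨s₀, hs₀, h₀⟩ := ih
    obtain ⟨s₁, hs₁, h₁⟩ := Rpl.sim1 hv hstep h₀
    exact ⟨s₁, hs₀.trans hs₁, h₁⟩

lemma Rpl.sim2s {v : Tm} {ϱ : Ty} (hv : IsValue v) {t s s' : Tm} (h : Rpl v ϱ t s)
    (hsteps : Steps s s') : ∃ t', Steps t t' ∧ Rpl v ϱ t' s' := by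
  induction hsteps with
  | refl => exact ⟨t, .refl, h⟩
  | tail _ hstep ih =>
    obtain ⟨t₀, ht₀, h₀⟩ := ih
    obtain ⟨t₁, ht₁, h₁⟩ := Rpl.sim2 hv hstep h₀
    exact ⟨t₁, ht₀.trans ht₁, h₁⟩

lemma Rpl.term_iff {v : Tm} {ϱ : Ty} (hv : IsValue v) {t s : Tm} (h : Rpl v ϱ t s) :
    Terminates t ↔ Terminates s := by
  constructor
  · rintro ⟨u, hsteps, huv⟩
    obtain ⟨s', hss, h'⟩ := Rpl.sim1s hv h hsteps
    obtain ⟨s'', hs''v, hs's'', _⟩ := Rpl.right_value hv h' huv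
    exact ⟨s'', hss.trans hs's'', hs''v⟩
  · rintro ⟨u, hsteps, huv⟩
    obtain ⟨t', htt, h'⟩ := Rpl.sim2s hv h hsteps
    obtain ⟨t'', ht''v, ht't'', _⟩ := Rpl.left_value hv h' huv
    exact ⟨t'', htt.trans ht't'', ht''v⟩

/-! #### Continuation transfer lemmas -/

lemma app_term_transfer {k₁ k₂ m₁ m₂ : Tm} (hk₁ : IsValue k₁) (hk₂ : IsValue k₂)
    (hco : Terminates m₁ → Terminates m₂)
    (hval : ∀ u₁ u₂, Steps m₁ u₁ → IsValue u₁ → Steps m₂ u₂ → IsValue u₂ →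
      Terminates (.app k₁ u₁) → Terminates (.app k₂ u₂))
    (h : Terminates (.app k₁ m₁)) : Terminates (.app k₂ m₂) := by
  obtain ⟨u, hu, huv⟩ := h
  obtain ⟨w₁, hw₁v, hsw₁, hrest⟩ := app_steps_value hk₁ hu huv
  obtain ⟨w₂, hsw₂, hw₂v⟩ := hco ⟨w₁, hsw₁, hw₁v⟩
  exact term_of_steps_term (steps_appR hk₂ hsw₂)
    (hval w₁ w₂ hsw₁ hw₁v hsw₂ hw₂v ⟨u, hrest, huv⟩)

/-- The trivial continuation. -/
def kid (τ : Ty) : Tm := .lam 0 τ .unitv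

lemma kid_value (τ : Ty) : IsValue (kid τ) := .lam _ _ _

lemma kid_hasTy {τ : Ty} (h : Ty.closed τ) : HasTy ∅ Ctx.empty (kid τ) (.arrow τ .unit) :=
  .lam h .unitv

lemma kid_app_term {τ : Ty} {w : Tm} (hw : IsValue w) : Terminates (.app (kid τ) w) := by
  refine ⟨.unitv, Relation.ReflTransGen.single ?_, .unitv⟩
  have hstep := Step.beta (x := 0) (τ := τ) (b := .unitv) hw
  simpa [Tm.subst1, Tm.msubst, kid] using hstep

lemma kid_term_iff {τ : Ty} {m : Tm} : Terminates (.app (kid τ) m) ↔ Terminates m := by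
  constructor
  · exact term_of_app_term (kid_value τ)
  · rintro ⟨w, hsw, hwv⟩
    exact term_of_steps_term (steps_appR (kid_value τ) hsw) (kid_app_term hwv)

/-- Monadic-lifting lemma for closures: let `Q ∈ Rel(ϱ₁, ϱ₂)` and
`R ∈ Rel(τ₁, τ₂)`, and let `e₁, e₂` be terms with `x:ϱᵢ ⊢ eᵢ : τᵢ` such that `x` is
active in both.  If for all `(v₁, v₂) ∈ Q` the substituted terms
`(e₁[x↦v₁], e₂[x↦v₂])` are in the `stev`-closure of `R`, then for all `(e₁', e₂')`
in the `stev`-closure of `Q`, the terms `(e₁[x↦e₁'], e₂[x↦e₂'])` are in the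
`stev`-closure of `R`. -/
theorem monadic_lifting
    (ϱ₁ ϱ₂ τ₁ τ₂ : Ty) (Q R : Rel)
    (hQ : RelOn ϱ₁ ϱ₂ Q) (hR : RelOn τ₁ τ₂ R)
    (x : ℕ) (e₁ e₂ : Tm)
    (h₁ : HasTy ∅ (Ctx.update Ctx.empty x ϱ₁) e₁ τ₁)
    (h₂ : HasTy ∅ (Ctx.update Ctx.empty x ϱ₂) e₂ τ₂)
    (ha₁ : Active x ϱ₁ e₁) (ha₂ : Active x ϱ₂ e₂)
    (hyp : ∀ v₁ v₂, Q v₁ v₂ → stevClo τ₁ τ₂ R (Tm.subst1 x v₁ e₁) (Tm.subst1 x v₂ e₂)) :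
    ∀ e₁' e₂', stevClo ϱ₁ ϱ₂ Q e₁' e₂' →
      stevClo τ₁ τ₂ R (Tm.subst1 x e₁' e₁) (Tm.subst1 x e₂' e₂) := by
  obtain ⟨hϱ₁c, hϱ₂c, hQv⟩ := hQ
  obtain ⟨hτ₁c, hτ₂c, hRv⟩ := hR
  rintro e₁' e₂' ⟨hty1', hty2', hco', hvals'⟩
  have htm₁ : HasTy ∅ Ctx.empty (Tm.subst1 x e₁' e₁) τ₁ := subst1_hasTy h₁ hty1'
  have htm₂ : HasTy ∅ Ctx.empty (Tm.subst1 x e₂' e₂) τ₂ := subst1_hasTy h₂ hty2'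
  have hbase : (Terminates (Tm.subst1 x e₁' e₁) ∨ Terminates (Tm.subst1 x e₂' e₂)) →
      ∃ v₁ v₂, IsValue v₁ ∧ IsValue v₂ ∧ Steps e₁' v₁ ∧ Steps e₂' v₂ ∧
        stClo ϱ₁ ϱ₂ Q v₁ v₂ := by
    intro h
    have hterm1 : Terminates e₁' := by
      rcases h with h | h
      · exact ha₁ e₁' hty1' h
      · exact hco'.mpr (ha₂ e₂' hty2' h)
    obtain ⟨v₁, hs1, hv1⟩ := hterm1
    obtain ⟨v₂, hs2, hv2⟩ := hco'.mp ⟨v₁, hs1, hv1⟩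
    exact ⟨v₁, v₂, hv1, hv2, hs1, hs2, hvals' v₁ v₂ hs1 hv1 hs2 hv2⟩
  have key : ∀ k₁ k₂, sClo τ₁ τ₂ R k₁ k₂ →
      (Terminates (.app k₁ (Tm.subst1 x e₁' e₁)) ↔
        Terminates (.app k₂ (Tm.subst1 x e₂' e₂))) := by
    intro k₁ k₂ hk
    obtain ⟨⟨hk1v, hk1t⟩, ⟨hk2v, hk2t⟩, hkrel⟩ := hk
    by_cases hterm : Terminates (.app k₁ (Tm.subst1 x e₁' e₁)) ∨
        Terminates (.app k₂ (Tm.subst1 x e₂' e₂))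
    · obtain ⟨v₁, v₂, hv1, hv2, hs1, hs2, hstQ⟩ :=
        hbase (hterm.imp (term_of_app_term hk1v) (term_of_app_term hk2v))
      have hiff1 : Terminates (.app k₁ (Tm.subst1 x e₁' e₁)) ↔
          Terminates (.app k₁ (Tm.subst1 x v₁ e₁)) :=
        Rpl.term_iff hv1 (Rpl.app (Rpl.refl _ _ k₁) (Rpl.subst_into (Rpl.repl hs1 hty1') x e₁))
      have hiff4 : Terminates (.app k₂ (Tm.subst1 x e₂' e₂)) ↔
          Terminates (.app k₂ (Tm.subst1 x v₂ e₂)) :=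
        Rpl.term_iff hv2 (Rpl.app (Rpl.refl _ _ k₂) (Rpl.subst_into (Rpl.repl hs2 hty2') x e₂))
      have hK₁ty : HasTy ∅ Ctx.empty (Tm.lam x ϱ₁ (.app k₁ e₁)) (.arrow ϱ₁ .unit) :=
        .lam hϱ₁c (.app (hasTy_of_closed hk1t) h₁)
      have hK₂ty : HasTy ∅ Ctx.empty (Tm.lam x ϱ₂ (.app k₂ e₂)) (.arrow ϱ₂ .unit) :=
        .lam hϱ₂c (.app (hasTy_of_closed hk2t) h₂)
      have hKbeta₁ : ∀ w : Tm, IsValue w →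
          (Terminates (.app (.lam x ϱ₁ (.app k₁ e₁)) w) ↔
            Terminates (.app k₁ (Tm.subst1 x w e₁))) := by
        intro w hw
        have hstep := Step.beta (x := x) (τ := ϱ₁) (b := .app k₁ e₁) (v := w) hw
        have heq : Tm.subst1 x w (.app k₁ e₁) = .app k₁ (Tm.subst1 x w e₁) := by
          have h0 : Tm.subst1 x w (.app k₁ e₁) =
              .app (Tm.subst1 x w k₁) (Tm.subst1 x w e₁) := by
            simp [Tm.subst1, Tm.msubst]
          rw [h0, closed_subst1_id hk1t]
        rw [heq] at hstep
        exact step_term_iff hstep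
      have hKbeta₂ : ∀ w : Tm, IsValue w →
          (Terminates (.app (.lam x ϱ₂ (.app k₂ e₂)) w) ↔
            Terminates (.app k₂ (Tm.subst1 x w e₂))) := by
        intro w hw
        have hstep := Step.beta (x := x) (τ := ϱ₂) (b := .app k₂ e₂) (v := w) hw
        have heq : Tm.subst1 x w (.app k₂ e₂) = .app k₂ (Tm.subst1 x w e₂) := by
          have h0 : Tm.subst1 x w (.app k₂ e₂) =
              .app (Tm.subst1 x w k₂) (Tm.subst1 x w e₂) := by
            simp [Tm.subst1, Tm.msubst]
          rw [h0, closed_subst1_id hk2t]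
        rw [heq] at hstep
        exact step_term_iff hstep
      have hKrel : sClo ϱ₁ ϱ₂ Q (.lam x ϱ₁ (.app k₁ e₁)) (.lam x ϱ₂ (.app k₂ e₂)) := by
        refine ⟨⟨.lam _ _ _, hK₁ty⟩, ⟨.lam _ _ _, hK₂ty⟩, ?_⟩
        intro w₁ w₂ hw
        obtain ⟨⟨hw1v, hw1t⟩, ⟨hw2v, hw2t⟩⟩ := hQv w₁ w₂ hw
        rw [hKbeta₁ w₁ hw1v, hKbeta₂ w₂ hw2v]
        obtain ⟨hsub1t, hsub2t, hcow, hvw⟩ := hyp w₁ w₂ hw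
        constructor
        · refine app_term_transfer hk1v hk2v hcow.mp ?_
          intro u₁ u₂ hsu₁ hu₁ hsu₂ hu₂
          exact ((hvw u₁ u₂ hsu₁ hu₁ hsu₂ hu₂).2.2 k₁ k₂
            ⟨⟨hk1v, hk1t⟩, ⟨hk2v, hk2t⟩, hkrel⟩).mp
        · refine app_term_transfer hk2v hk1v hcow.mpr ?_
          intro u₂ u₁ hsu₂ hu₂ hsu₁ hu₁
          exact ((hvw u₁ u₂ hsu₁ hu₁ hsu₂ hu₂).2.2 k₁ k₂
            ⟨⟨hk1v, hk1t⟩, ⟨hk2v, hk2t⟩, hkrel⟩).mpr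
      have hmid := hstQ.2.2 _ _ hKrel
      rw [hKbeta₁ v₁ hv1, hKbeta₂ v₂ hv2] at hmid
      exact hiff1.trans (hmid.trans hiff4.symm)
    · push_neg at hterm
      exact iff_of_false hterm.1 hterm.2
  have hkidS : sClo τ₁ τ₂ R (kid τ₁) (kid τ₂) := by
    refine ⟨⟨kid_value τ₁, kid_hasTy hτ₁c⟩, ⟨kid_value τ₂, kid_hasTy hτ₂c⟩, ?_⟩
    intro w₁ w₂ hw
    obtain ⟨⟨hw1v, _⟩, ⟨hw2v, _⟩⟩ := hRv w₁ w₂ hw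
    exact iff_of_true (kid_app_term hw1v) (kid_app_term hw2v)
  refine ⟨htm₁, htm₂, ?_, ?_⟩
  · rw [← kid_term_iff (τ := τ₁) (m := Tm.subst1 x e₁' e₁),
      ← kid_term_iff (τ := τ₂) (m := Tm.subst1 x e₂' e₂)]
    exact key _ _ hkidS
  · intro u₁ u₂ hsu₁ hu₁ hsu₂ hu₂
    refine ⟨⟨hu₁, steps_preservation hsu₁ htm₁⟩, ⟨hu₂, steps_preservation hsu₂ htm₂⟩, ?_⟩
    intro k₁ k₂ hk
    exact (term_app_value hk.1.1 hsu₁ hu₁).symm.trans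
      ((key k₁ k₂ hk).trans (term_app_value hk.2.1.1 hsu₂ hu₂))

end RecLC
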